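/- Let F1, F2, F be full-dimensional tree topologies on [N] and suppose F ∈ C(F1, F2), i.e., there exist ultrametrics w¹ ∈ ut(F1) and w² ∈ ut(F2) with their coordinatewise maximum w in ut(F). Then for each clade S in F̄ = {S ∈ F : |S| ≥ 3} ∪ {[N]}, either there exists S1 ∈ F1 ∪ {[N]} such that cl_{F1}(p) = S1 for every pair p with cl_F(p) = S, or there exists S2 ∈ F2 ∪ {[N]} such that cl_{F2}(p) = S2 for every pair p with cl_F(p) = S. -/

import Mathlib

/-- A tree topology on `[N]`: a nested family of clades. -/
def IsTreeTopology {N : ℕ} (F : Finset (Finset (Fin N))) : Prop :=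
  (∀ S ∈ F, 2 ≤ S.card ∧ S.card ≤ N - 1) ∧
  (∀ S₁ ∈ F, ∀ S₂ ∈ F, S₁ ≠ S₂ →
    S₁ ⊂ S₂ ∨ S₂ ⊂ S₁ ∨ S₁ ∩ S₂ = ∅)

/-- The closure of a pair `p` in `F`: the intersection of all clades of `F`
containing `p`, together with the ground set `[N]`.  For a tree topology this
is the minimal clade containing `p`, or `[N]` if no clade contains `p`. -/
def cl {N : ℕ} (F : Finset (Finset (Fin N))) (p : Finset (Fin N)) :
    Finset (Fin N) :=
  ((insert Finset.univ F).filter (fun S => p ⊆ S)).inf id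

/-- The maximum among three reals is attained at least twice. -/
def maxTwice (a b c : ℝ) : Prop :=
  (a = b ∧ c ≤ a) ∨ (a = c ∧ b ≤ a) ∨ (b = c ∧ a ≤ b)

/-- Three-point (ultrametric) condition for a pairwise-distance vector. -/
def IsUltrametricVec {N : ℕ} (w : Fin N → Fin N → ℝ) : Prop :=
  ∀ i j k : Fin N, i ≠ j → i ≠ k → j ≠ k →
    maxTwice (w i j) (w i k) (w j k)

/-- Membership in `ut(F)`: a symmetric ultrametric whose coordinates are
ordered according to the closures of pairs in the tree topology `F`. -/
def memUT {N : ℕ} (F : Finset (Finset (Fin N))) (w : Fin N → Fin N → ℝ) :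
    Prop :=
  (∀ i j, w i j = w j i) ∧ IsUltrametricVec w ∧
  (∀ i j k l : Fin N, i ≠ j → k ≠ l →
    (cl F {i, j} = cl F {k, l} → w i j = w k l) ∧
    (cl F {i, j} ⊂ cl F {k, l} → w i j < w k l))

/-- `F̄ = {S ∈ F : |S| ≥ 3} ∪ {[N]}`. -/
def Fbar {N : ℕ} (F : Finset (Finset (Fin N))) : Finset (Finset (Fin N)) :=
  insert Finset.univ (F.filter (fun S => 3 ≤ S.card))

/-- `F` is bifurcated. -/
def Bifurcated {N : ℕ} (F : Finset (Finset (Fin N))) : Prop :=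
  ∀ S ∈ Fbar F,
    (∃ S' ∈ F, S' ⊂ S ∧ S'.card = S.card - 1) ∨
    (∃ S' ∈ F, ∃ S'' ∈ F, S' ⊂ S ∧ S'' ⊂ S ∧ S' ∪ S'' = S)


open Finset

section Laminar
variable {α : Type*} [DecidableEq α]

def Lam (F : Finset (Finset α)) : Prop :=
  ∀ T₁ ∈ F, ∀ T₂ ∈ F, T₁ ⊆ T₂ ∨ T₂ ⊆ T₁ ∨ T₁ ∩ T₂ = ∅

lemma lam_step (F : Finset (Finset α)) (X E S : Finset α)
    (hlam : Lam F) (hcond : ∀ T ∈ F, T ⊆ X ∧ 2 ≤ T.card ∧ T ≠ X)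
    (hSF : S ∈ F) (hmin : ∀ T ∈ F, ¬ T ⊂ S) (hE : E ⊂ S) (hEne : E.Nonempty) :
    Lam ((F.erase S).image (· \ E)) ∧
    ((F.erase S).image (· \ E)).card + 1 = F.card ∧
    (∀ T ∈ (F.erase S).image (· \ E), T ⊆ X \ E ∧ 2 ≤ T.card ∧ T ≠ X \ E) ∧
    (∀ T ∈ F.erase S, (T ∩ E).Nonempty → S ⊆ T) := by
  have hES : E ⊆ S := hE.subset
  obtain ⟨e0, he0⟩ := hEne
  obtain ⟨s0, hs0S, hs0E⟩ := exists_of_ssubset hE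
  -- key claim
  have hsub : ∀ T ∈ F.erase S, (T ∩ E).Nonempty → S ⊆ T := by
    intro T hT ⟨e, he⟩
    have heT : e ∈ T := (mem_inter.mp he).1
    have heS : e ∈ S := hES (mem_inter.mp he).2
    have hTF : T ∈ F := mem_of_mem_erase hT
    have hTS : T ≠ S := ne_of_mem_erase hT
    rcases hlam T hTF S hSF with h | h | h
    · exact absurd (ssubset_of_subset_of_ne h hTS) (hmin T hTF)
    · exact h
    · exact absurd (h ▸ mem_inter.mpr ⟨heT, heS⟩) (notMem_empty e)
  have hEorS : ∀ T ∈ F.erase S, T ∩ E = ∅ ∨ (S ⊆ T ∧ E ⊆ T) :=  by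
    intro T hT
    rcases (T ∩ E).eq_empty_or_nonempty with h | h
    · exact Or.inl h
    · have := hsub T hT h
      exact Or.inr ⟨this, hES.trans this⟩
  have hdis : ∀ {T : Finset α}, T ∩ E = ∅ → T \ E = T := by
    intro T h
    exact sdiff_eq_self_of_disjoint (disjoint_iff_inter_eq_empty.mpr h)
  have hinj : Set.InjOn (· \ E) (F.erase S) := by
    intro T₁ h₁ T₂ h₂ heq
    simp only at heq
    rcases hEorS T₁ h₁ with hd₁ | hs₁ <;> rcases hEorS T₂ h₂ with hd₂ | hs₂
    · rw [hdis hd₁, hdis hd₂] at heq; exact heq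
    · exfalso
      rw [hdis hd₁] at heq
      -- T₁ = T₂ \ E, S ⊆ T₂
      have hs0T₁ : s0 ∈ T₁ := heq ▸ (mem_sdiff.mpr ⟨hs₂.1 hs0S, hs0E⟩)
      have hTF : T₁ ∈ F := mem_of_mem_erase h₁
      rcases hlam T₁ hTF S hSF with h | h | h
      · exact hmin T₁ hTF (ssubset_of_subset_of_ne h (ne_of_mem_erase h₁))
      · have : e0 ∈ T₁ ∩ E := mem_inter.mpr ⟨h (hES he0), he0⟩
        rw [hd₁] at this; exact notMem_empty _ this
      · exact notMem_empty _ (h ▸ mem_inter.mpr ⟨hs0T₁, hs0S⟩)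
    · exfalso
      rw [hdis hd₂] at heq
      have hs0T₂ : s0 ∈ T₂ := heq ▸ (mem_sdiff.mpr ⟨hs₁.1 hs0S, hs0E⟩)
      have hTF : T₂ ∈ F := mem_of_mem_erase h₂
      rcases hlam T₂ hTF S hSF with h | h | h
      · exact hmin T₂ hTF (ssubset_of_subset_of_ne h (ne_of_mem_erase h₂))
      · have : e0 ∈ T₂ ∩ E := mem_inter.mpr ⟨h (hES he0), he0⟩
        rw [hd₂] at this; exact notMem_empty _ this
      · exact notMem_empty _ (h ▸ mem_inter.mpr ⟨hs0T₂, hs0S⟩)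
    · have : T₁ \ E ∪ E = T₂ \ E ∪ E := by rw [heq]
      rwa [sdiff_union_of_subset hs₁.2, sdiff_union_of_subset hs₂.2] at this
  have hcard : ((F.erase S).image (· \ E)).card + 1 = F.card := by
    rw [card_image_of_injOn hinj, card_erase_of_mem hSF]
    have : 0 < F.card := card_pos.mpr ⟨S, hSF⟩
    omega
  refine ⟨?_, hcard, ?_, hsub⟩
  · intro T₁' h₁' T₂' h₂'
    obtain ⟨T₁, h₁, rfl⟩ := mem_image.mp h₁'
    obtain ⟨T₂, h₂, rfl⟩ := mem_image.mp h₂'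
    rcases hlam T₁ (mem_of_mem_erase h₁) T₂ (mem_of_mem_erase h₂) with h | h | h
    · exact Or.inl (sdiff_subset_sdiff h (Subset.refl E))
    · exact Or.inr (Or.inl (sdiff_subset_sdiff h (Subset.refl E)))
    · refine Or.inr (Or.inr ?_)
      rw [← subset_empty, ← h]
      intro x hx
      simp only [mem_inter, mem_sdiff] at hx ⊢
      exact ⟨hx.1.1, hx.2.1⟩
  · intro T' hT'
    obtain ⟨T, hT, rfl⟩ := mem_image.mp hT'
    have hTF : T ∈ F := mem_of_mem_erase hT
    obtain ⟨hTX, hT2, hTne⟩ := hcond T hTF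
    refine ⟨sdiff_subset_sdiff hTX (Subset.refl E), ?_, ?_⟩
    · rcases hEorS T hT with hd | hs
      · rw [hdis hd]; exact hT2
      · have h1 : S ⊂ T := ssubset_of_subset_of_ne hs.1 (ne_of_mem_erase hT).symm
        have h2 : S.card < T.card := card_lt_card h1
        have h3 : E.card < S.card := card_lt_card hE
        have h4 : 2 ≤ S.card := (hcond S hSF).2.1
        rw [card_sdiff_of_subset hs.2]
        omega
    · intro hXE
      rcases hEorS T hT with hd | hs
      · rw [hdis hd] at hXE
        -- T = X \ E
        have hs0T : s0 ∈ T := by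
          rw [hXE]; exact mem_sdiff.mpr ⟨(hcond S hSF).1 hs0S, hs0E⟩
        rcases hlam T hTF S hSF with h | h | h
        · rcases eq_or_ne T S with rfl | hne
          · have : e0 ∈ T ∩ E := mem_inter.mpr ⟨hES he0, he0⟩
            rw [hd] at this; exact notMem_empty _ this
          · exact hmin T hTF (ssubset_of_subset_of_ne h hne)
        · have : e0 ∈ T ∩ E := mem_inter.mpr ⟨h (hES he0), he0⟩
          rw [hd] at this; exact notMem_empty _ this
        · exact notMem_empty _ (h ▸ mem_inter.mpr ⟨hs0T, hs0S⟩)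
      · have : T = X := by
          have := congrArg (· ∪ E) hXE
          rwa [sdiff_union_of_subset hs.2,
            sdiff_union_of_subset (hES.trans ((hcond S hSF).1))] at this
        exact hTne this

end Laminar

section Laminar2
variable {α : Type*} [DecidableEq α]
set_option linter.unusedSectionVars false

lemma singleton_ssubset_of {S : Finset α} (h2 : 2 ≤ S.card) {x : α} (hx : x ∈ S) :
    {x} ⊂ S := by
  rw [Finset.ssubset_def]
  refine ⟨singleton_subset_iff.mpr hx, fun h => ?_⟩
  have := card_le_card h
  simp at this
  omega

lemma lemA : ∀ (n : ℕ) (F : Finset (Finset α)) (X : Finset α), F.card ≤ n →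
    Lam F → (∀ T ∈ F, T ⊆ X ∧ 2 ≤ T.card ∧ T ≠ X) → F.card ≤ X.card - 2 := by
  intro n
  induction n with
  | zero => intro F X h _ _; omega
  | succ n ih =>
    intro F X hn hlam hcond
    rcases F.eq_empty_or_nonempty with rfl | hne
    · simp
    obtain ⟨S, hSF, hmin⟩ : ∃ S ∈ F, ∀ T ∈ F, ¬ T ⊂ S := by
      obtain ⟨S, hSF, hmin⟩ := F.exists_minimal hne; exact ⟨S, hSF, fun T hT hTS => (Finset.ssubset_def.mp hTS).2 (hmin hT (Finset.ssubset_def.mp hTS).1)⟩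
    obtain ⟨hSX, hS2, hSne⟩ := hcond S hSF
    have hScard : S.Nonempty := card_pos.mp (by omega)
    obtain ⟨x', hx'⟩ := hScard
    have hE : ({x'} : Finset α) ⊂ S := singleton_ssubset_of hS2 hx'
    obtain ⟨hlam', hcard, hcond', -⟩ :=
      lam_step F X {x'} S hlam hcond hSF hmin hE ⟨x', mem_singleton_self x'⟩
    have hIH := ih _ _ (by omega) hlam' hcond'
    have hXcard : (X \ {x'}).card = X.card - 1 := by
      rw [card_sdiff_of_subset (singleton_subset_iff.mpr (hSX hx'))]
      simp
    have hX3 : 3 ≤ X.card := by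
      have := card_lt_card (ssubset_of_subset_of_ne hSX hSne)
      omega
    omega

lemma lemD : ∀ (n : ℕ) (F : Finset (Finset α)) (X S₀ : Finset α) (x y z : α),
    F.card ≤ n → Lam F → (∀ T ∈ F, T ⊆ X ∧ 2 ≤ T.card ∧ T ≠ X) →
    (S₀ = X ∨ S₀ ∈ F) → x ∈ S₀ → y ∈ S₀ → z ∈ S₀ →
    x ≠ y → x ≠ z → y ≠ z →
    (∀ T ∈ F, T ⊂ S₀ → ¬(({x,y} : Finset α) ⊆ T) ∧ ¬(({x,z} : Finset α) ⊆ T) ∧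
      ¬(({y,z} : Finset α) ⊆ T)) →
    F.card ≤ X.card - 3 := by
  intro n
  induction n with
  | zero => intro F X S₀ x y z h _ _ _ _ _ _ _ _ _ _; omega
  | succ n ih =>
    intro F X S₀ x y z hn hlam hcond hS₀ hx hy hz hxy hxz hyz hpair
    rcases F.eq_empty_or_nonempty with rfl | hne
    · simp
    obtain ⟨S, hSF, hmin⟩ : ∃ S ∈ F, ∀ T ∈ F, ¬ T ⊂ S := by
      obtain ⟨S, hSF, hmin⟩ := F.exists_minimal hne; exact ⟨S, hSF, fun T hT hTS => (Finset.ssubset_def.mp hTS).2 (hmin hT (Finset.ssubset_def.mp hTS).1)⟩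
    obtain ⟨hSX, hS2, hSne⟩ := hcond S hSF
    have hS₀X : S₀ ⊆ X := by
      rcases hS₀ with rfl | h
      · exact Subset.refl _
      · exact (hcond S₀ h).1
    by_cases hSS : S = S₀
    · -- S₀ is minimal; remove {y, z} and S₀
      subst hSS
      have hyzS : ({y, z} : Finset α) ⊆ S := by
        rw [insert_subset_iff, singleton_subset_iff]; exact ⟨hy, hz⟩
      have hE : ({y, z} : Finset α) ⊂ S := by
        refine ssubset_of_subset_of_ne hyzS ?_
        intro h
        have : x ∈ ({y, z} : Finset α) := h ▸ hx
        simp only [mem_insert, mem_singleton] at this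
        rcases this with rfl | rfl
        · exact hxy rfl
        · exact hxz rfl
      obtain ⟨hlam', hcard, hcond', -⟩ :=
        lam_step F X {y, z} S hlam hcond hSF hmin hE ⟨y, by simp⟩
      have hIH := lemA _ _ _ le_rfl hlam' hcond'
      have hyzX : ({y, z} : Finset α) ⊆ X := hyzS.trans hSX
      have hyzcard : ({y, z} : Finset α).card = 2 := by
        rw [card_insert_of_notMem (by simpa using hyz), card_singleton]
      have hXcard : (X \ {y, z}).card = X.card - 2 := by
        rw [card_sdiff_of_subset hyzX, hyzcard]
      have hS3 : 3 ≤ S.card := by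
        have : ({x, y, z} : Finset α) ⊆ S := by
          rw [insert_subset_iff, insert_subset_iff, singleton_subset_iff]
          exact ⟨hx, hy, hz⟩
        have h3 : ({x, y, z} : Finset α).card = 3 := by
          rw [card_insert_of_notMem (by simp [hxy, hxz]),
            card_insert_of_notMem (by simpa using hyz), card_singleton]
        calc 3 = ({x, y, z} : Finset α).card := h3.symm
          _ ≤ S.card := card_le_card this
      have hX4 : 4 ≤ X.card := by
        have := card_lt_card (ssubset_of_subset_of_ne hSX hSne)
        omega
      omega
    · have hcases : S ⊂ S₀ ∨ S ∩ S₀ = ∅ := by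
        rcases hS₀ with rfl | h
        · exact Or.inl (ssubset_of_subset_of_ne hSX hSne)
        · rcases hlam S hSF S₀ h with hh | hh | hh
          · exact Or.inl (ssubset_of_subset_of_ne hh hSS)
          · exact absurd (ssubset_of_subset_of_ne hh (fun a => hSS a.symm)) (hmin S₀ h)
          · exact Or.inr hh
      -- choose x' ∈ S with x' ∉ {x,y,z}
      have hmain : ∀ x' ∈ S, x' ∉ ({x, y, z} : Finset α) →
          F.card ≤ X.card - 3 := by
        intro x' hx'S hx'xyz
        have hE : ({x'} : Finset α) ⊂ S := singleton_ssubset_of hS2 hx'S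
        obtain ⟨hlam', hcard, hcond', hkey⟩ :=
          lam_step F X {x'} S hlam hcond hSF hmin hE ⟨x', mem_singleton_self x'⟩
        have hx'X : x' ∈ X := hSX hx'S
        simp only [mem_insert, mem_singleton, not_or] at hx'xyz
        obtain ⟨hx'x, hx'y, hx'z⟩ := hx'xyz
        have hmem : ∀ a ∈ S₀, a ≠ x' → a ∈ S₀ \ {x'} := by
          intro a ha hane
          exact mem_sdiff.mpr ⟨ha, by simpa using hane⟩
        have hS₀' : S₀ \ {x'} = X \ {x'} ∨ S₀ \ {x'} ∈ (F.erase S).image (· \ {x'}) := by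
          rcases hS₀ with rfl | h
          · exact Or.inl rfl
          · exact Or.inr (mem_image.mpr ⟨S₀, mem_erase.mpr ⟨fun a => hSS a.symm, h⟩, rfl⟩)
        have hpair' : ∀ T' ∈ (F.erase S).image (· \ {x'}), T' ⊂ S₀ \ {x'} →
            ¬(({x,y} : Finset α) ⊆ T') ∧ ¬(({x,z} : Finset α) ⊆ T') ∧
            ¬(({y,z} : Finset α) ⊆ T') := by
          intro T' hT' hss
          obtain ⟨T, hT, rfl⟩ := mem_image.mp hT'
          have hTF : T ∈ F := mem_of_mem_erase hT
          have hTS₀ : T ⊂ S₀ := by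
            rcases hcases with hsub | hdisj
            · -- x' ∈ S ⊆ S₀
              have hx'S₀ : x' ∈ S₀ := hsub.subset hx'S
              have hTsub : T ⊆ S₀ := by
                intro t ht
                rcases eq_or_ne t x' with rfl | htne
                · exact hx'S₀
                · exact (mem_sdiff.mp (hss.subset (mem_sdiff.mpr ⟨ht, by simpa using htne⟩))).1
              refine ssubset_of_subset_of_ne hTsub ?_
              rintro rfl
              exact (ssubset_irrefl _) hss
            · -- S disjoint from S₀
              by_cases hx'T : x' ∈ T
              · exfalso
                have hST : S ⊆ T := hkey T hT ⟨x', mem_inter.mpr ⟨hx'T, mem_singleton_self x'⟩⟩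
                obtain ⟨a, haS, b, hbS, hab⟩ := one_lt_card.mp (by omega : 1 < S.card)
                have hget : ∃ s, s ∈ S ∧ s ≠ x' := by
                  rcases eq_or_ne a x' with rfl | hax
                  · exact ⟨b, hbS, fun h => hab h.symm⟩
                  · exact ⟨a, haS, hax⟩
                obtain ⟨s, hsS, hsx'⟩ := hget
                have : s ∈ S₀ \ {x'} :=
                  hss.subset (mem_sdiff.mpr ⟨hST hsS, by simpa using hsx'⟩)
                exact notMem_empty s (hdisj ▸ mem_inter.mpr ⟨hsS, (mem_sdiff.mp this).1⟩)
              · have : T \ {x'} = T := by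
                  apply sdiff_eq_self_of_disjoint
                  simp [disjoint_singleton_right, hx'T]
                rw [this] at hss
                exact lt_of_lt_of_le hss sdiff_subset
          have := hpair T hTF hTS₀
          exact ⟨fun h => this.1 (h.trans sdiff_subset),
            fun h => this.2.1 (h.trans sdiff_subset),
            fun h => this.2.2 (h.trans sdiff_subset)⟩
        have hIH := ih _ (X \ {x'}) (S₀ \ {x'}) x y z (by omega) hlam' hcond' hS₀'
          (hmem x hx (fun h => hx'x h.symm)) (hmem y hy (fun h => hx'y h.symm))
          (hmem z hz (fun h => hx'z h.symm)) hxy hxz hyz hpair'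
        have hXcard : (X \ {x'}).card = X.card - 1 := by
          rw [card_sdiff_of_subset (singleton_subset_iff.mpr hx'X)]; simp
        have hX4 : 4 ≤ X.card := by
          have hins : insert x' {x, y, z} ⊆ X := by
            rw [insert_subset_iff]
            refine ⟨hx'X, ?_⟩
            rw [insert_subset_iff, insert_subset_iff, singleton_subset_iff]
            exact ⟨hS₀X hx, hS₀X hy, hS₀X hz⟩
          have hc4 : (insert x' {x, y, z} : Finset α).card = 4 := by
            rw [card_insert_of_notMem (by simp [hx'x, hx'y, hx'z]),
              card_insert_of_notMem (by simp [hxy, hxz]),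
              card_insert_of_notMem (by simpa using hyz), card_singleton]
          have := card_le_card hins
          omega
        omega
      rcases hcases with hsub | hdisj
      · -- S ⊂ S₀ : S contains at most one of x, y, z
        obtain ⟨hp1, hp2, hp3⟩ := hpair S hSF hsub
        have : ∃ x' ∈ S, x' ∉ ({x, y, z} : Finset α) := by
          by_contra hcon
          push_neg at hcon
          obtain ⟨a, haS, b, hbS, hab⟩ := one_lt_card.mp (by omega : 1 < S.card)
          have ha' := hcon a haS
          have hb' := hcon b hbS
          simp only [mem_insert, mem_singleton] at ha' hb'
          have hps : ∀ u v : α, u ∈ S → v ∈ S → ({u, v} : Finset α) ⊆ S := by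
            intro u v hu hv
            rw [insert_subset_iff, singleton_subset_iff]; exact ⟨hu, hv⟩
          rcases ha' with rfl | rfl | rfl <;> rcases hb' with rfl | rfl | rfl
          · exact hab rfl
          · exact hp1 (hps _ _ haS hbS)
          · exact hp2 (hps _ _ haS hbS)
          · exact hp1 (hps _ _ hbS haS)
          · exact hab rfl
          · exact hp3 (hps _ _ haS hbS)
          · exact hp2 (hps _ _ hbS haS)
          · exact hp3 (hps _ _ hbS haS)
          · exact hab rfl
        obtain ⟨x', h1, h2⟩ := this
        exact hmain x' h1 h2
      · -- S disjoint from S₀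
        obtain ⟨x', hx'S⟩ := card_pos.mp (by omega : 0 < S.card)
        refine hmain x' hx'S ?_
        intro hcon
        simp only [mem_insert, mem_singleton] at hcon
        have hx'S₀ : x' ∈ S₀ := by
          rcases hcon with rfl | rfl | rfl
          · exact hx
          · exact hy
          · exact hz
        exact notMem_empty x' (hdisj ▸ mem_inter.mpr ⟨hx'S, hx'S₀⟩)

end Laminar2

section CL
variable {N : ℕ} {F : Finset (Finset (Fin N))}

lemma lam_insert_univ (hF : IsTreeTopology F) : Lam (insert Finset.univ F) := by
  intro T₁ h₁ T₂ h₂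
  rcases mem_insert.mp h₁ with rfl | h₁
  · exact Or.inr (Or.inl (subset_univ T₂))
  rcases mem_insert.mp h₂ with rfl | h₂
  · exact Or.inl (subset_univ T₁)
  rcases eq_or_ne T₁ T₂ with rfl | hne
  · exact Or.inl (Subset.refl T₁)
  rcases hF.2 T₁ h₁ T₂ h₂ hne with h | h | h
  · exact Or.inl h.subset
  · exact Or.inr (Or.inl h.subset)
  · exact Or.inr (Or.inr h)

lemma pair_subset_cl (p : Finset (Fin N)) : p ⊆ cl F p := by
  rw [← Finset.le_iff_subset]
  apply Finset.le_inf
  intro b hb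
  exact (mem_filter.mp hb).2

lemma cl_le {T p : Finset (Fin N)} (hT : T ∈ insert Finset.univ F) (h : p ⊆ T) :
    cl F p ⊆ T := by
  rw [← Finset.le_iff_subset]
  exact Finset.inf_le (mem_filter.mpr ⟨hT, h⟩)

lemma cl_mem (hF : IsTreeTopology F) (p : Finset (Fin N)) (hp : p.Nonempty) :
    cl F p ∈ insert Finset.univ F := by
  obtain ⟨a, ha⟩ := hp
  set s := (insert Finset.univ F).filter (fun S => p ⊆ S) with hs
  have hne : s.Nonempty := ⟨Finset.univ, mem_filter.mpr ⟨mem_insert_self _ _, subset_univ p⟩⟩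
  obtain ⟨m, hm, hmin⟩ : ∃ m ∈ s, ∀ T ∈ s, ¬ T ⊂ m := by
    obtain ⟨m, hm, hmin⟩ := s.exists_minimal hne; exact ⟨m, hm, fun T hT hTS => (Finset.ssubset_def.mp hTS).2 (hmin hT (Finset.ssubset_def.mp hTS).1)⟩
  have hmono : ∀ T ∈ s, m ⊆ T := by
    intro T hT
    have hm' := mem_filter.mp hm
    have hT' := mem_filter.mp hT
    rcases lam_insert_univ hF m hm'.1 T hT'.1 with h | h | h
    · exact h
    · rcases eq_or_ne T m with rfl | hne'
      · exact Subset.refl T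
      · exact absurd (ssubset_of_subset_of_ne h hne') (hmin T hT)
    · exact absurd (h ▸ mem_inter.mpr ⟨hm'.2 ha, hT'.2 ha⟩) (notMem_empty a)
  have : cl F p = m := le_antisymm (Finset.inf_le hm) (Finset.le_inf hmono)
  rw [this]
  exact (mem_filter.mp hm).1

lemma no_triple (hF : IsTreeTopology F) (hfull : F.card = N - 2)
    {x y z : Fin N} (hxy : x ≠ y) (hxz : x ≠ z) (hyz : y ≠ z)
    (hc1 : cl F {x, y} = cl F {x, z}) (hc2 : cl F {x, y} = cl F {y, z}) : False := by
  set S₀ := cl F {x, y} with hS₀def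
  have hS₀mem : S₀ ∈ insert Finset.univ F := cl_mem hF _ ⟨x, by simp⟩
  have hlamF : Lam F := by
    intro T₁ h₁ T₂ h₂
    rcases eq_or_ne T₁ T₂ with rfl | hne
    · exact Or.inl (Subset.refl T₁)
    rcases hF.2 T₁ h₁ T₂ h₂ hne with h | h | h
    · exact Or.inl h.subset
    · exact Or.inr (Or.inl h.subset)
    · exact Or.inr (Or.inr h)
  have hcond : ∀ T ∈ F, T ⊆ Finset.univ ∧ 2 ≤ T.card ∧ T ≠ Finset.univ := by
    intro T hT
    refine ⟨subset_univ T, (hF.1 T hT).1, ?_⟩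
    intro h
    have h1 := (hF.1 T hT).2
    rw [h, card_univ, Fintype.card_fin] at h1
    have h2 : 2 ≤ T.card := (hF.1 T hT).1
    rw [h, card_univ, Fintype.card_fin] at h2
    omega
  have hxS : x ∈ S₀ := pair_subset_cl {x, y} (by simp)
  have hyS : y ∈ S₀ := pair_subset_cl {x, y} (by simp)
  have hzS : z ∈ S₀ := by
    rw [hc1] at hS₀def ⊢
    exact pair_subset_cl {x, z} (by simp)
  have hS₀F : S₀ = Finset.univ ∨ S₀ ∈ F := by
    rcases mem_insert.mp hS₀mem with h | h
    · exact Or.inl h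
    · exact Or.inr h
  have hpair : ∀ T ∈ F, T ⊂ S₀ → ¬(({x,y} : Finset (Fin N)) ⊆ T) ∧
      ¬(({x,z} : Finset (Fin N)) ⊆ T) ∧ ¬(({y,z} : Finset (Fin N)) ⊆ T) := by
    intro T hT hTS
    have hTmem : T ∈ insert Finset.univ F := mem_insert_of_mem hT
    refine ⟨fun h => ?_, fun h => ?_, fun h => ?_⟩
    · exact (ssubset_irrefl S₀) (lt_of_le_of_lt (hS₀def ▸ cl_le hTmem h) hTS)
    · refine (ssubset_irrefl S₀) (lt_of_le_of_lt ?_ hTS)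
      exact le_trans (le_of_eq hc1) (Finset.le_iff_subset.mpr (cl_le hTmem h))
    · refine (ssubset_irrefl S₀) (lt_of_le_of_lt ?_ hTS)
      exact le_trans (le_of_eq hc2) (Finset.le_iff_subset.mpr (cl_le hTmem h))
  have hN : 3 ≤ N := by
    have hsub : ({x, y, z} : Finset (Fin N)) ⊆ Finset.univ := subset_univ _
    have h3 : ({x, y, z} : Finset (Fin N)).card = 3 := by
      rw [card_insert_of_notMem (by simp [hxy, hxz]),
        card_insert_of_notMem (by simpa using hyz), card_singleton]
    have := card_le_card hsub
    rw [h3, card_univ, Fintype.card_fin] at this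
    exact this
  have := lemD F.card F Finset.univ S₀ x y z le_rfl hlamF hcond hS₀F hxS hyS hzS
    hxy hxz hyz hpair
  rw [hfull, card_univ, Fintype.card_fin] at this
  omega

variable {S : Finset (Fin N)} {W u : Fin N → Fin N → ℝ} {c : ℝ}

lemma mem_of_cl_left {i j : Fin N} (h : cl F {i, j} = S) : i ∈ S :=
  h ▸ pair_subset_cl {i, j} (by simp)

lemma mem_of_cl_right {i j : Fin N} (h : cl F {i, j} = S) : j ∈ S :=
  h ▸ pair_subset_cl {i, j} (by simp)

lemma olaplem (hF : IsTreeTopology F) (hfull : F.card = N - 2)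
    (hS : S ∈ insert Finset.univ F)
    (uult : IsUltrametricVec u)
    (hle : ∀ i j, u i j ≤ W i j)
    (hWeq : ∀ i j, i ≠ j → cl F {i, j} = S → W i j = c)
    (hWlt : ∀ i j, i ≠ j → i ∈ S → j ∈ S → cl F {i, j} ≠ S → W i j < c)
    {a m b : Fin N} (ham : a ≠ m) (hmb : m ≠ b) (hab : a ≠ b)
    (h1 : cl F {a, m} = S) (h2 : cl F {m, b} = S)
    (hu1 : u a m = c) : u m b = c := by
  have haS : a ∈ S := mem_of_cl_left h1
  have hbS : b ∈ S := mem_of_cl_right h2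
  by_contra hne
  have hlt : u m b < c :=
    lt_of_le_of_ne (le_of_le_of_eq (hle m b) (hWeq m b hmb h2)) hne
  rcases uult a m b ham hab hmb with ⟨h, _⟩ | ⟨h, _⟩ | ⟨h, h'⟩
  · -- u a m = u a b
    have huab : u a b = c := by rw [← h, hu1]
    have hclab : cl F {a, b} = S := by
      by_contra hne'
      have := hWlt a b hab haS hbS hne'
      linarith [hle a b]
    exact no_triple hF hfull ham hab hmb (h1.trans hclab.symm) (h1.trans h2.symm)
  · rw [hu1] at h; linarith
  · rw [hu1] at h'; linarith

lemma chainlem (hF : IsTreeTopology F) (hfull : F.card = N - 2)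
    (hS : S ∈ insert Finset.univ F)
    (uult : IsUltrametricVec u)
    (hle : ∀ i j, u i j ≤ W i j)
    (hWeq : ∀ i j, i ≠ j → cl F {i, j} = S → W i j = c)
    (hWlt : ∀ i j, i ≠ j → i ∈ S → j ∈ S → cl F {i, j} ≠ S → W i j < c)
    {i j k l : Fin N} (hij : i ≠ j) (hjk : j ≠ k) (hkl : k ≠ l)
    (hik : i ≠ k) (hjl : j ≠ l)
    (h1 : cl F {i, j} = S) (h2 : cl F {j, k} = S) (h3 : cl F {k, l} = S)
    (hu1 : u i j = c) : u k l = c := by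
  have hiS : i ∈ S := mem_of_cl_left h1
  have hjS : j ∈ S := mem_of_cl_right h1
  have hkS : k ∈ S := mem_of_cl_right h2
  have hlS : l ∈ S := mem_of_cl_right h3
  by_cases hil : i = l
  · subst hil
    exact absurd (h1.trans ((Finset.pair_comm k i ▸ h3 : cl F {i, k} = S)).symm)
      (fun hc => no_triple hF hfull hij hik hjk hc (h1.trans h2.symm))
  have hclik : cl F {i, k} ≠ S := by
    intro hc
    exact no_triple hF hfull hij hik hjk (h1.trans hc.symm) (h1.trans h2.symm)
  have huik : u i k < c := lt_of_le_of_lt (hle i k) (hWlt i k hik hiS hkS hclik)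
  have hujk : u j k = c := by
    rcases uult i j k hij hik hjk with ⟨h, _⟩ | ⟨h, _⟩ | ⟨h, h'⟩
    · rw [hu1] at h; linarith
    · rw [← h, hu1]
    · rw [hu1] at h'; linarith
  have hcljl : cl F {j, l} ≠ S := by
    intro hc
    exact no_triple hF hfull hjk hjl hkl (h2.trans hc.symm) (h2.trans h3.symm)
  have hujl : u j l < c := lt_of_le_of_lt (hle j l) (hWlt j l hjl hjS hlS hcljl)
  rcases uult j k l hjk hjl hkl with ⟨h, _⟩ | ⟨h, _⟩ | ⟨h, h'⟩
  · rw [hujk] at h; linarith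
  · rw [← h, hujk]
  · rw [hujk] at h'; linarith

lemma croslem (hF : IsTreeTopology F) (hS : S ∈ insert Finset.univ F)
    {i k l : Fin N} (hiS : i ∈ S) (hkl : k ≠ l)
    (h2 : cl F {k, l} = S) :
    cl F {i, k} = S ∨ cl F {i, l} = S := by
  have hkS : k ∈ S := mem_of_cl_left h2
  have hlS : l ∈ S := mem_of_cl_right h2
  by_contra hcon
  push_neg at hcon
  obtain ⟨n1, n2⟩ := hcon
  have hT1mem : cl F {i, k} ∈ insert Finset.univ F := cl_mem hF _ ⟨i, by simp⟩
  have hT2mem : cl F {i, l} ∈ insert Finset.univ F := cl_mem hF _ ⟨i, by simp⟩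
  have hiT1 : i ∈ cl F {i, k} := pair_subset_cl {i, k} (by simp)
  have hiT2 : i ∈ cl F {i, l} := pair_subset_cl {i, l} (by simp)
  have hkT1 : k ∈ cl F {i, k} := pair_subset_cl {i, k} (by simp)
  have hlT2 : l ∈ cl F {i, l} := pair_subset_cl {i, l} (by simp)
  have hT1S : cl F {i, k} ⊆ S := cl_le hS (by rw [insert_subset_iff, singleton_subset_iff]; exact ⟨hiS, hkS⟩)
  have hT2S : cl F {i, l} ⊆ S := cl_le hS (by rw [insert_subset_iff, singleton_subset_iff]; exact ⟨hiS, hlS⟩)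
  rcases lam_insert_univ hF _ hT1mem _ hT2mem with h | h | h
  · apply n2
    refine subset_antisymm hT2S ?_
    rw [← h2]
    apply cl_le hT2mem
    rw [insert_subset_iff, singleton_subset_iff]
    exact ⟨h hkT1, hlT2⟩
  · apply n1
    refine subset_antisymm hT1S ?_
    rw [← h2]
    apply cl_le hT1mem
    rw [insert_subset_iff, singleton_subset_iff]
    exact ⟨hkT1, h hlT2⟩
  · exact notMem_empty i (h ▸ mem_inter.mpr ⟨hiT1, hiT2⟩)

lemma proplem (hF : IsTreeTopology F) (hfull : F.card = N - 2)
    (hS : S ∈ insert Finset.univ F)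
    (usym : ∀ i j, u i j = u j i) (uult : IsUltrametricVec u)
    (hle : ∀ i j, u i j ≤ W i j)
    (hWeq : ∀ i j, i ≠ j → cl F {i, j} = S → W i j = c)
    (hWlt : ∀ i j, i ≠ j → i ∈ S → j ∈ S → cl F {i, j} ≠ S → W i j < c)
    {i j k l : Fin N} (hij : i ≠ j) (hkl : k ≠ l)
    (h1 : cl F {i, j} = S) (h2 : cl F {k, l} = S)
    (hu1 : u i j = c) : u k l = c := by
  have h1' : cl F {j, i} = S := by rw [Finset.pair_comm]; exact h1
  have hu1' : u j i = c := by rw [← usym]; exact hu1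
  by_cases hki : k = i
  · subst hki
    by_cases hlj : l = j
    · subst hlj; exact hu1
    · exact olaplem hF hfull hS uult hle hWeq hWlt hij.symm hkl
        (fun h => hlj h.symm) h1' h2 hu1'
  by_cases hkj : k = j
  · subst hkj
    by_cases hli : l = i
    · subst hli; exact hu1'
    · exact olaplem hF hfull hS uult hle hWeq hWlt hij hkl
        (fun h => hli h.symm) h1 h2 hu1
  by_cases hli : l = i
  · have h2' : cl F {i, k} = S := by rw [Finset.pair_comm i k, ← hli]; exact h2
    have hres := olaplem hF hfull hS uult hle hWeq hWlt hij.symm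
      (fun h => hki h.symm) (fun h => hkj h.symm) h1' h2' hu1'
    rw [usym k l, hli]; exact hres
  by_cases hlj : l = j
  · have h2' : cl F {j, k} = S := by rw [Finset.pair_comm j k, ← hlj]; exact h2
    have hres := olaplem hF hfull hS uult hle hWeq hWlt hij
      (fun h => hkj h.symm) (fun h => hki h.symm) h1 h2' hu1
    rw [usym k l, hlj]; exact hres
  -- all four distinct
  have hiS : i ∈ S := mem_of_cl_left h1
  rcases croslem hF hS hiS hkl h2 with hc | hc
  · exact chainlem hF hfull hS uult hle hWeq hWlt hij.symm
      (fun h => hki h.symm) hkl (fun h => hkj h.symm) (fun h => hli h.symm)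
      h1' hc h2 hu1'
  · have h2' : cl F {l, k} = S := by rw [Finset.pair_comm]; exact h2
    have := chainlem hF hfull hS uult hle hWeq hWlt hij.symm
      (fun h => hli h.symm) (fun h => hkl h.symm) (fun h => hlj h.symm)
      (fun h => hki h.symm) h1' hc h2' hu1'
    rw [usym]; exact this

lemma constlem {G : Finset (Finset (Fin N))} (hG : IsTreeTopology G)
    (hS : S ∈ insert Finset.univ F)
    (hu : memUT G u)
    (hle : ∀ i j, u i j ≤ W i j)
    (hWeq : ∀ i j, i ≠ j → cl F {i, j} = S → W i j = c)
    (hWlt : ∀ i j, i ≠ j → i ∈ S → j ∈ S → cl F {i, j} ≠ S → W i j < c)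
    {i j k l : Fin N} (hij : i ≠ j) (hkl : k ≠ l)
    (h1 : cl F {i, j} = S) (h2 : cl F {k, l} = S)
    (hu1 : u i j = c) (hu2 : u k l = c) :
    cl G {i, j} = cl G {k, l} := by
  have hAmem : cl G {i, j} ∈ insert Finset.univ G := cl_mem hG _ ⟨i, by simp⟩
  have hBmem : cl G {k, l} ∈ insert Finset.univ G := cl_mem hG _ ⟨k, by simp⟩
  rcases lam_insert_univ hG _ hAmem _ hBmem with h | h | h
  · rcases eq_or_ne (cl G {i, j}) (cl G {k, l}) with he | hne
    · exact he
    · have := (hu.2.2 i j k l hij hkl).2 (ssubset_of_subset_of_ne h hne)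
      rw [hu1, hu2] at this; linarith
  · rcases eq_or_ne (cl G {i, j}) (cl G {k, l}) with he | hne
    · exact he
    · have := (hu.2.2 k l i j hkl hij).2 (ssubset_of_subset_of_ne h (fun a => hne a.symm))
      rw [hu1, hu2] at this; linarith
  · exfalso
    have hiA : i ∈ cl G {i, j} := pair_subset_cl {i, j} (by simp)
    have hkB : k ∈ cl G {k, l} := pair_subset_cl {k, l} (by simp)
    have hik : i ≠ k := by
      rintro rfl
      exact notMem_empty i (h ▸ mem_inter.mpr ⟨hiA, hkB⟩)
    have hDmem : cl G {i, k} ∈ insert Finset.univ G := cl_mem hG _ ⟨i, by simp⟩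
    have hiD : i ∈ cl G {i, k} := pair_subset_cl {i, k} (by simp)
    have hkD : k ∈ cl G {i, k} := pair_subset_cl {i, k} (by simp)
    have hkA : k ∉ cl G {i, j} := by
      intro hk
      exact notMem_empty k (h ▸ mem_inter.mpr ⟨hk, hkB⟩)
    rcases lam_insert_univ hG _ hAmem _ hDmem with hh | hh | hh
    · have hlt := (hu.2.2 i j i k hij hik).2
        (ssubset_of_subset_of_ne hh (by rintro he; exact hkA (he ▸ hkD)))
      rw [hu1] at hlt
      -- u i k > c, but u i k ≤ W i k ≤ c
      have hiS : i ∈ S := mem_of_cl_left h1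
      have hkS : k ∈ S := mem_of_cl_left h2
      have hWik : W i k ≤ c := by
        by_cases hc : cl F {i, k} = S
        · exact le_of_eq (hWeq i k hik hc)
        · exact le_of_lt (hWlt i k hik hiS hkS hc)
      linarith [hle i k]
    · exact hkA (hh hkD)
    · exact notMem_empty i (hh ▸ mem_inter.mpr ⟨hiA, hiD⟩)

end CL

theorem compatible_topologies {N : ℕ}
    (F₁ F₂ F : Finset (Finset (Fin N)))
    (hF₁ : IsTreeTopology F₁) (hF₂ : IsTreeTopology F₂)
    (hF : IsTreeTopology F)
    (hfull₁ : F₁.card = N - 2) (hfull₂ : F₂.card = N - 2)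
    (hfull : F.card = N - 2)
    (w₁ w₂ : Fin N → Fin N → ℝ)
    (hw₁ : memUT F₁ w₁) (hw₂ : memUT F₂ w₂)
    (hw : memUT F (fun i j => max (w₁ i j) (w₂ i j))) :
    ∀ S ∈ Fbar F,
      (∃ S₁ ∈ insert Finset.univ F₁,
        ∀ i j : Fin N, i ≠ j → cl F {i, j} = S → cl F₁ {i, j} = S₁) ∨
      (∃ S₂ ∈ insert Finset.univ F₂,
        ∀ i j : Fin N, i ≠ j → cl F {i, j} = S → cl F₂ {i, j} = S₂) := by
  intro S hS
  set W : Fin N → Fin N → ℝ := fun i j => max (w₁ i j) (w₂ i j) with hWdef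
  have hS' : S ∈ insert Finset.univ F := by
    rcases mem_insert.mp hS with h | h
    · exact h ▸ mem_insert_self _ _
    · exact mem_insert_of_mem (mem_filter.mp h).1
  by_cases hP : ∃ i j : Fin N, i ≠ j ∧ cl F {i, j} = S
  · obtain ⟨i₀, j₀, hij₀, hcl₀⟩ := hP
    set c : ℝ := W i₀ j₀ with hcdef
    have hWeq : ∀ i j : Fin N, i ≠ j → cl F {i, j} = S → W i j = c := by
      intro i j hij hcl
      exact (hw.2.2 i j i₀ j₀ hij hij₀).1 (hcl.trans hcl₀.symm)
    have hWlt : ∀ i j : Fin N, i ≠ j → i ∈ S → j ∈ S → cl F {i, j} ≠ S →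
        W i j < c := by
      intro i j hij hiS hjS hne
      have hsub : cl F {i, j} ⊆ S := by
        apply cl_le hS'
        rw [insert_subset_iff, singleton_subset_iff]
        exact ⟨hiS, hjS⟩
      have hss : cl F {i, j} ⊂ cl F {i₀, j₀} := by
        rw [hcl₀]
        exact ssubset_of_subset_of_ne hsub hne
      exact (hw.2.2 i j i₀ j₀ hij hij₀).2 hss
    have hle₁ : ∀ i j, w₁ i j ≤ W i j := fun i j => le_max_left _ _
    have hle₂ : ∀ i j, w₂ i j ≤ W i j := fun i j => le_max_right _ _
    by_cases hA : ∀ i j : Fin N, i ≠ j → cl F {i, j} = S → w₁ i j = c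
    · left
      refine ⟨cl F₁ {i₀, j₀}, cl_mem hF₁ _ ⟨i₀, by simp⟩, ?_⟩
      intro i j hij hcl
      exact constlem hF₁ hS' hw₁ hle₁ hWeq hWlt hij hij₀ hcl hcl₀
        (hA i j hij hcl) (hA i₀ j₀ hij₀ hcl₀)
    · push_neg at hA
      obtain ⟨k₀, l₀, hkl₀, hclk₀, hne₁⟩ := hA
      have hB : ∀ i j : Fin N, i ≠ j → cl F {i, j} = S → w₂ i j = c := by
        intro i j hij hcl
        by_contra hne₂
        have hmax : w₁ i j = c ∨ w₂ i j = c := by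
          have : W i j = c := hWeq i j hij hcl
          rw [hWdef] at this
          rcases max_choice (w₁ i j) (w₂ i j) with h | h
          · exact Or.inl (by rw [← this]; exact h.symm)
          · exact Or.inr (by rw [← this]; exact h.symm)
        have hw1 : w₁ i j = c := hmax.resolve_right hne₂
        exact hne₁ (proplem hF hfull hS' hw₁.1 hw₁.2.1 hle₁ hWeq hWlt hij hkl₀
          hcl hclk₀ hw1)
      right
      refine ⟨cl F₂ {i₀, j₀}, cl_mem hF₂ _ ⟨i₀, by simp⟩, ?_⟩
      intro i j hij hcl
      exact constlem hF₂ hS' hw₂ hle₂ hWeq hWlt hij hij₀ hcl hcl₀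
        (hB i j hij hcl) (hB i₀ j₀ hij₀ hcl₀)
  · left
    refine ⟨Finset.univ, mem_insert_self _ _, ?_⟩
    intro i j hij hcl
    exact absurd ⟨i, j, hij, hcl⟩ hP
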